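/- Sign changes of the remainder of the Fourier–Chebyshev partial sum: Let f : [−1,1] → ℝ be continuous and let n be a nonnegative integer. Define c₀ = (1/π)∫_{−1}^{1} f(x)w(x)dx and c_i = (2/π)∫_{−1}^{1} f(x)T_i(x)w(x)dx for i = 1, …, n, and put P_n = Σ_{i=0}^{n} c_i T_i. Then either f(x) = P_n(x) for all x ∈ [−1,1], or there exist n + 2 points −1 ≤ x₀ < x₁ < ⋯ < x_{n+1} ≤ 1 such that (f − P_n)(x_j)·(f − P_n)(x_{j+1}) < 0 for every j = 0, 1, …, n; that is, f − P_n changes sign at least n + 1 times on [−1,1]. -/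

import Mathlib

open MeasureTheory Polynomial Polynomial.Chebyshev


-- substitution lemma
lemma cheb_subst (g : ℝ → ℝ) :
    ∫ x in Set.Icc (-1 : ℝ) 1, g x * (1 / Real.sqrt (1 - x ^ 2)) =
      ∫ θ in Set.Ioo 0 Real.pi, g (Real.cos θ) := by
  rw [integral_Icc_eq_integral_Ioo]
  have himg : Real.cos '' (Set.Ioo 0 Real.pi) = Set.Ioo (-1 : ℝ) 1 := by
    ext x
    constructor
    · rintro ⟨θ, hθ, rfl⟩
      constructor
      · have := Real.strictAntiOn_cos ⟨hθ.1.le, hθ.2.le⟩ ⟨Real.pi_pos.le, le_refl _⟩ hθ.2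
        simpa [Real.cos_pi] using this
      · have := Real.strictAntiOn_cos ⟨le_refl _, Real.pi_pos.le⟩ ⟨hθ.1.le, hθ.2.le⟩ hθ.1
        simpa [Real.cos_zero] using this
    · rintro ⟨h1, h2⟩
      refine ⟨Real.arccos x, ⟨?_, ?_⟩, Real.cos_arccos h1.le h2.le⟩
      · exact Real.arccos_pos.2 h2
      · have : Real.arccos x ≤ Real.pi := Real.arccos_le_pi x
        rcases this.lt_or_eq with h | h
        · exact h
        · exact absurd (Real.arccos_eq_pi.1 h) (by linarith)
  rw [← himg,
    integral_image_eq_integral_abs_deriv_smul measurableSet_Ioo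
      (fun θ _ => (Real.hasDerivAt_cos θ).hasDerivWithinAt)
      (Real.injOn_cos.mono Set.Ioo_subset_Icc_self)
      (fun x => g x * (1 / Real.sqrt (1 - x ^ 2)))]
  refine setIntegral_congr_fun measurableSet_Ioo (fun θ hθ => ?_)
  have hs : 0 < Real.sin θ := Real.sin_pos_of_pos_of_lt_pi hθ.1 hθ.2
  have h1 : Real.sqrt (1 - Real.cos θ ^ 2) = Real.sin θ := by
    rw [← Real.sin_sq]; exact Real.sqrt_sq hs.le
  rw [smul_eq_mul, abs_neg, abs_of_pos hs, h1]
  field_simp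


lemma cos_int_integral (k : ℤ) :
    ∫ θ in Set.Ioo (0:ℝ) Real.pi, Real.cos (k * θ) =
      if k = 0 then Real.pi else 0 := by
  rw [← integral_Ioc_eq_integral_Ioo, ← intervalIntegral.integral_of_le Real.pi_pos.le]
  rcases eq_or_ne k 0 with rfl | hk
  · simp [Real.pi_pos.le]
  · have hk' : (k : ℝ) ≠ 0 := Int.cast_ne_zero.2 hk
    have hder : ∀ θ ∈ Set.uIcc (0:ℝ) Real.pi,
        HasDerivAt (fun θ : ℝ => Real.sin (k * θ) / k) (Real.cos (k * θ)) θ := by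
      intro θ _
      have h1 : HasDerivAt (fun θ : ℝ => (k : ℝ) * θ) k θ := by
        simpa using (hasDerivAt_id θ).const_mul (k : ℝ)
      have h2 := (Real.hasDerivAt_sin ((k : ℝ) * θ)).comp θ h1
      have h3 := h2.div_const (k : ℝ)
      simpa [mul_comm, mul_div_assoc, hk'] using h3
    have hint : IntervalIntegrable (fun θ : ℝ => Real.cos (k * θ)) volume 0 Real.pi :=
      (Real.continuous_cos.comp (continuous_const.mul continuous_id)).intervalIntegrable _ _
    rw [intervalIntegral.integral_eq_sub_of_hasDerivAt hder hint]
    simp [Real.sin_int_mul_pi, hk]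

lemma cos_mul_cos_integral (a b : ℕ) :
    ∫ θ in Set.Ioo (0:ℝ) Real.pi, Real.cos (a * θ) * Real.cos (b * θ) =
      if a = b then (if a = 0 then Real.pi else Real.pi / 2) else 0 := by
  have hpt : ∀ θ : ℝ, Real.cos (a * θ) * Real.cos (b * θ) =
      (Real.cos (((a + b : ℕ) : ℤ) * θ) + Real.cos ((((a : ℤ) - b : ℤ) : ℝ) * θ)) / 2 := by
    intro θ
    have h1 := Real.cos_add (a * θ) (b * θ)
    have h2 := Real.cos_sub (a * θ) (b * θ)
    have e1 : (((a + b : ℕ) : ℤ) : ℝ) * θ = a * θ + b * θ := by push_cast; ring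
    have e2 : ((((a : ℤ) - b : ℤ)) : ℝ) * θ = a * θ - b * θ := by push_cast; ring
    rw [e1, e2, h1, h2]; ring
  rw [setIntegral_congr_fun measurableSet_Ioo (fun θ _ => hpt θ)]
  have key : ∀ k : ℤ, IntegrableOn (fun θ : ℝ => Real.cos (k * θ)) (Set.Ioo 0 Real.pi) := by
    intro k
    exact ((Real.continuous_cos.comp (continuous_const.mul continuous_id)).integrableOn_Icc
      (a := 0) (b := Real.pi)).mono_set Set.Ioo_subset_Icc_self
  have : (∫ θ in Set.Ioo (0:ℝ) Real.pi,
      (Real.cos (((a + b : ℕ) : ℤ) * θ) + Real.cos ((((a : ℤ) - b : ℤ) : ℝ) * θ)) / 2) =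
      ((∫ θ in Set.Ioo (0:ℝ) Real.pi, Real.cos (((a + b : ℕ) : ℤ) * θ)) +
       (∫ θ in Set.Ioo (0:ℝ) Real.pi, Real.cos ((((a : ℤ) - b : ℤ) : ℝ) * θ))) / 2 := by
    rw [integral_div, integral_add (key _) (key _)]
  rw [this, cos_int_integral, cos_int_integral]
  rcases eq_or_ne a b with rfl | hab
  · rcases eq_or_ne a 0 with rfl | ha
    · norm_num
    · have h1 : ((a + a : ℕ) : ℤ) ≠ 0 := by positivity
      simp [h1, ha]
  · have h1 : (a : ℤ) + b ≠ 0 := by omega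
    have h2 : (a : ℤ) - b ≠ 0 := by omega
    simp [h1, h2, hab]


/-- g is a linear combination of T_0, ..., T_k. -/
def ChebRep (k : ℕ) (g : ℝ → ℝ) : Prop :=
  ∃ a : ℕ → ℝ, ∀ x : ℝ, g x = ∑ i ∈ Finset.range (k + 1), a i * (T ℝ i).eval x

lemma chebRep_congr {k : ℕ} {g h : ℝ → ℝ} (he : ∀ x, g x = h x) (hg : ChebRep k g) :
    ChebRep k h := by
  obtain ⟨a, ha⟩ := hg
  exact ⟨a, fun x => (he x) ▸ ha x⟩

lemma chebRep_zero (k : ℕ) : ChebRep k (fun _ => 0) :=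
  ⟨fun _ => 0, fun x => by simp⟩

lemma chebRep_add {k : ℕ} {g h : ℝ → ℝ} (hg : ChebRep k g) (hh : ChebRep k h) :
    ChebRep k (fun x => g x + h x) := by
  obtain ⟨a, ha⟩ := hg; obtain ⟨b, hb⟩ := hh
  exact ⟨fun i => a i + b i, fun x => by
    simp only [ha x, hb x, ← Finset.sum_add_distrib, add_mul]⟩

lemma chebRep_smul {k : ℕ} {g : ℝ → ℝ} (c : ℝ) (hg : ChebRep k g) :
    ChebRep k (fun x => c * g x) := by
  obtain ⟨a, ha⟩ := hg
  exact ⟨fun i => c * a i, fun x => by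
    simp only [ha x, Finset.mul_sum, mul_assoc]⟩

lemma chebRep_sum {k : ℕ} {ι : Type*} (s : Finset ι) (F : ι → ℝ → ℝ)
    (h : ∀ i ∈ s, ChebRep k (F i)) : ChebRep k (fun x => ∑ i ∈ s, F i x) := by
  classical
  induction s using Finset.induction with
  | empty => simpa using chebRep_zero k
  | @insert j s hnot ih =>
    have h1 := h j (Finset.mem_insert_self j s)
    have h2 := ih (fun i hi => h i (Finset.mem_insert_of_mem hi))
    have := chebRep_add h1 h2
    refine chebRep_congr (fun x => ?_) this
    rw [Finset.sum_insert hnot]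

lemma chebRep_T {k i : ℕ} (hik : i ≤ k) : ChebRep k (fun x => (T ℝ i).eval x) := by
  classical
  refine ⟨fun j => if j = i then 1 else 0, fun x => ?_⟩
  rw [Finset.sum_eq_single i]
  · simp
  · intro b _ hb; simp [hb]
  · intro hi; exact absurd (Finset.mem_range.2 (by omega)) hi

lemma chebRep_mono {k k' : ℕ} (hk : k ≤ k') {g : ℝ → ℝ} (hg : ChebRep k g) :
    ChebRep k' g := by
  classical
  obtain ⟨a, ha⟩ := hg
  refine ⟨fun i => if i ≤ k then a i else 0, fun x => ?_⟩
  rw [← Finset.sum_subset (Finset.range_subset_range.2 (by omega) :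
      Finset.range (k+1) ⊆ Finset.range (k'+1))
      (fun i _ hi => by
        have hik : ¬ i ≤ k := by simp only [Finset.mem_range] at hi; omega
        simp [hik])]
  rw [ha x]
  refine Finset.sum_congr rfl (fun i hi => ?_)
  have hik : i ≤ k := by simp only [Finset.mem_range] at hi; omega
  simp [hik]

lemma chebRep_mulX_T {k i : ℕ} (hik : i ≤ k) :
    ChebRep (k + 1) (fun x => x * (T ℝ i).eval x) := by
  rcases Nat.eq_zero_or_pos i with rfl | hi
  · refine chebRep_congr (fun x => ?_) (chebRep_T (show 1 ≤ k + 1 by omega))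
    simp [T_one]
  · have e1 : T ℝ (1 + (i : ℤ)) = T ℝ ((i + 1 : ℕ) : ℤ) := by
      congr 1; push_cast; ring
    have e2 : T ℝ (1 - (i : ℤ)) = T ℝ ((i - 1 : ℕ) : ℤ) := by
      rw [show (1 - (i : ℤ)) = -(((i - 1 : ℕ) : ℤ)) by omega, T_neg]
    have key : ∀ x : ℝ, (1/2) * (T ℝ ((i+1 : ℕ))).eval x
        + (1/2) * (T ℝ ((i-1 : ℕ))).eval x = x * (T ℝ i).eval x := by
      intro x
      have h := T_mul_T (R := ℝ) 1 (i : ℤ)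
      rw [e1, e2, T_one] at h
      have hx := congrArg (fun p : ℝ[X] => p.eval x) h
      simp only [eval_add, eval_mul, eval_X, eval_ofNat] at hx
      linarith [hx]
    exact chebRep_congr key
      (chebRep_add (chebRep_smul _ (chebRep_T (by omega)))
        (chebRep_smul _ (chebRep_T (by omega))))

lemma chebRep_mulX {k : ℕ} {g : ℝ → ℝ} (hg : ChebRep k g) :
    ChebRep (k + 1) (fun x => x * g x) := by
  obtain ⟨a, ha⟩ := hg
  have h := chebRep_sum (k := k+1) (Finset.range (k+1))
    (fun i => fun x => a i * (x * (T ℝ i).eval x))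
    (fun i hi => chebRep_smul _ (chebRep_mulX_T (k := k) (by
      simp only [Finset.mem_range] at hi; omega)))
  refine chebRep_congr (fun x => ?_) h
  rw [ha x, Finset.mul_sum]
  exact Finset.sum_congr rfl (fun i _ => by ring)

lemma chebRep_prod (t : ℕ → ℝ) : ∀ m : ℕ,
    ChebRep m (fun x => ∏ i ∈ Finset.range m, (x - t i))
  | 0 => ⟨fun _ => 1, fun x => by simp⟩
  | (m+1) => by
    have ih := chebRep_prod t m
    have h := chebRep_add (chebRep_mulX ih)
      (chebRep_smul (-(t m)) (chebRep_mono (Nat.le_succ m) ih))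
    refine chebRep_congr (fun x => ?_) h
    rw [Finset.prod_range_succ]
    ring


/-- An alternating chain for r of length k+1 within [-1,1]. -/
def AltChain (r : ℝ → ℝ) (k : ℕ) : Prop :=
  ∃ x : ℕ → ℝ, (∀ i ≤ k, x i ∈ Set.Icc (-1:ℝ) 1) ∧ (∀ i ≤ k, r (x i) ≠ 0) ∧
    (∀ i < k, x i < x (i+1)) ∧ (∀ i < k, r (x i) * r (x (i+1)) < 0)

lemma sign_pos_of_neg_neg {a b c : ℝ} (h1 : a * b < 0) (h2 : a * c < 0) : 0 < b * c := by
  have ha : a ≠ 0 := by rintro rfl; simp at h1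
  have h3 : 0 < (a * b) * (a * c) := mul_pos_of_neg_of_neg h1 h2
  have e : (a * b) * (a * c) = (a * a) * (b * c) := by ring
  rw [e] at h3
  by_contra h
  push_neg at h
  have := mul_nonpos_of_nonneg_of_nonpos (mul_self_nonneg a) h
  linarith

lemma sign_nonneg_of_neg_nonpos {a b c : ℝ} (h1 : a * b < 0) (h2 : a * c ≤ 0) :
    0 ≤ b * c := by
  have ha : a ≠ 0 := by rintro rfl; simp at h1
  have h3 : 0 ≤ (a * b) * (a * c) := by nlinarith
  have e : (a * b) * (a * c) = (a * a) * (b * c) := by ring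
  rw [e] at h3
  by_contra h
  push_neg at h
  have h4 : (a * a) * (b * c) < 0 :=
    mul_neg_of_pos_of_neg (mul_self_pos.2 ha) h
  linarith

lemma sign_neg_of_pos_neg {a b c : ℝ} (h1 : 0 < a * b) (h2 : b * c < 0) : a * c < 0 := by
  have hb : b ≠ 0 := by rintro rfl; simp at h1
  have h3 : (a * b) * (b * c) < 0 := mul_neg_of_pos_of_neg h1 h2
  have e : (a * b) * (b * c) = (b * b) * (a * c) := by ring
  rw [e] at h3
  by_contra h
  push_neg at h
  have := mul_nonneg (mul_self_nonneg b) h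
  linarith

lemma altChain_of_succ {r : ℝ → ℝ} {k : ℕ} (h : AltChain r (k+1)) : AltChain r k := by
  obtain ⟨x, h1, h2, h3, h4⟩ := h
  exact ⟨x, fun i hi => h1 i (by omega), fun i hi => h2 i (by omega),
    fun i hi => h3 i (by omega), fun i hi => h4 i (by omega)⟩

lemma altChain_mono {r : ℝ → ℝ} {j k : ℕ} (hjk : j ≤ k) (h : AltChain r k) :
    AltChain r j := by
  induction k with
  | zero => simpa [Nat.le_zero.1 hjk]
  | succ k ih =>
    rcases Nat.lt_or_ge j (k+1) with h' | h'
    · exact ih (by omega) (altChain_of_succ h)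
    · have : j = k + 1 := by omega
      subst this; exact h

lemma altChain_chain_mono {k : ℕ} {x : ℕ → ℝ}
    (h3 : ∀ i < k, x i < x (i+1)) : ∀ i j, i < j → j ≤ k → x i < x j := by
  intro i j hij hjk
  induction j with
  | zero => omega
  | succ j ih =>
    rcases Nat.lt_or_ge i j with h' | h'
    · exact lt_trans (ih h' (by omega)) (h3 j (by omega))
    · have : i = j := by omega
      subst this
      exact h3 i (by omega)

lemma altChain_to_fin {r : ℝ → ℝ} {k : ℕ} (h : AltChain r k) :
    ∃ x : Fin (k + 1) → ℝ, StrictMono x ∧ (∀ j, x j ∈ Set.Icc (-1:ℝ) 1) ∧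
      ∀ j : Fin k, r (x j.castSucc) * r (x j.succ) < 0 := by
  obtain ⟨x, h1, h2, h3, h4⟩ := h
  refine ⟨fun j => x j, ?_, ?_, ?_⟩
  · intro a b hab
    exact altChain_chain_mono h3 a b (by exact_mod_cast hab) (by omega)
  · intro j; exact h1 j (by omega)
  · intro j
    have := h4 j j.isLt
    simpa [Fin.coe_castSucc, Fin.val_succ] using this

/-- prepend a point below the chain -/
lemma altChain_ext_low {r : ℝ → ℝ} {k : ℕ} {z : ℕ → ℝ} {y : ℝ}
    (h1 : ∀ i ≤ k, z i ∈ Set.Icc (-1:ℝ) 1) (h2 : ∀ i ≤ k, r (z i) ≠ 0)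
    (h3 : ∀ i < k, z i < z (i+1)) (h4 : ∀ i < k, r (z i) * r (z (i+1)) < 0)
    (hy : y ∈ Set.Icc (-1:ℝ) 1) (hy0 : y < z 0) (hys : r y * r (z 0) < 0) :
    AltChain r (k+1) := by
  refine ⟨fun i => if i = 0 then y else z (i-1), fun i hi => ?_, fun i hi => ?_,
    fun i hi => ?_, fun i hi => ?_⟩
  · by_cases h : i = 0
    · simpa [h] using hy
    · simpa [h] using h1 (i-1) (by omega)
  · by_cases h : i = 0
    · simp only []
      rw [if_pos h]
      intro h0; rw [h0] at hys; simp at hys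
    · simp only [if_neg h]
      exact h2 (i-1) (by omega)
  · by_cases h : i = 0
    · simpa [h] using hy0
    · have e : i + 1 - 1 = (i-1) + 1 := by omega
      simp only [if_neg h, if_neg (by omega : ¬ i + 1 = 0), e]
      exact h3 (i-1) (by omega)
  · by_cases h : i = 0
    · simpa [h] using hys
    · have e : i + 1 - 1 = (i-1) + 1 := by omega
      simp only [if_neg h, if_neg (by omega : ¬ i + 1 = 0), e]
      exact h4 (i-1) (by omega)

/-- append a point above the chain -/
lemma altChain_ext_high {r : ℝ → ℝ} {k : ℕ} {z : ℕ → ℝ} {y : ℝ}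
    (h1 : ∀ i ≤ k, z i ∈ Set.Icc (-1:ℝ) 1) (h2 : ∀ i ≤ k, r (z i) ≠ 0)
    (h3 : ∀ i < k, z i < z (i+1)) (h4 : ∀ i < k, r (z i) * r (z (i+1)) < 0)
    (hy : y ∈ Set.Icc (-1:ℝ) 1) (hy0 : z k < y) (hys : r (z k) * r y < 0) :
    AltChain r (k+1) := by
  refine ⟨fun i => if i ≤ k then z i else y, fun i hi => ?_, fun i hi => ?_,
    fun i hi => ?_, fun i hi => ?_⟩
  · by_cases h : i ≤ k
    · simpa [h] using h1 i h
    · simpa [h] using hy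
  · by_cases h : i ≤ k
    · simpa [h] using h2 i h
    · simp only [if_neg h]
      intro h0; rw [h0] at hys; simp at hys
  · by_cases h : i < k
    · simp only [if_pos (by omega : i ≤ k), if_pos (by omega : i + 1 ≤ k)]
      exact h3 i h
    · have hik : i = k := by omega
      simp only []
      rw [if_pos (by omega : i ≤ k), if_neg (by omega : ¬ i + 1 ≤ k), hik]
      exact hy0
  · by_cases h : i < k
    · simp only [if_pos (by omega : i ≤ k), if_pos (by omega : i + 1 ≤ k)]
      exact h4 i h
    · have hik : i = k := by omega
      simp only []
      rw [if_pos (by omega : i ≤ k), if_neg (by omega : ¬ i + 1 ≤ k), hik]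
      exact hys

/-- insert two points inside a gap of the chain -/
lemma altChain_ext_mid {r : ℝ → ℝ} {k : ℕ} {z : ℕ → ℝ} {y1 y2 : ℝ} {j : ℕ}
    (h1 : ∀ i ≤ k, z i ∈ Set.Icc (-1:ℝ) 1) (h2 : ∀ i ≤ k, r (z i) ≠ 0)
    (h3 : ∀ i < k, z i < z (i+1)) (h4 : ∀ i < k, r (z i) * r (z (i+1)) < 0)
    (hjk : j < k)
    (hy1 : y1 ∈ Set.Icc (-1:ℝ) 1) (hy2 : y2 ∈ Set.Icc (-1:ℝ) 1)
    (ho1 : z j < y1) (ho2 : y1 < y2) (ho3 : y2 < z (j+1))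
    (hs1 : r (z j) * r y1 < 0) (hs2 : r y1 * r y2 < 0) :
    AltChain r (k+2) := by
  have hs3 : r y2 * r (z (j+1)) < 0 := by
    have hs1' : r y1 * r (z j) < 0 := by rw [mul_comm] at hs1; exact hs1
    have hp : 0 < r y2 * r (z j) := sign_pos_of_neg_neg hs2 hs1'
    exact sign_neg_of_pos_neg hp (h4 j hjk)
  refine ⟨fun i => if i ≤ j then z i else if i = j+1 then y1 else if i = j+2 then y2
    else z (i-2), fun i hi => ?_, fun i hi => ?_, fun i hi => ?_, fun i hi => ?_⟩
  · rcases Nat.lt_or_ge i (j+1) with h | h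
    · simpa [Nat.lt_succ_iff.1 h] using h1 i (by omega)
    · rcases Nat.eq_or_lt_of_le h with h' | h'
      · simp only [if_neg (by omega : ¬ i ≤ j), if_pos h'.symm]
        exact hy1
      · rcases Nat.eq_or_lt_of_le h' with h'' | h''
        · simp only [if_neg (by omega : ¬ i ≤ j), if_neg (by omega : ¬ i = j+1),
            if_pos (by omega : i = j+2)]
          exact hy2
        · simp only [if_neg (by omega : ¬ i ≤ j), if_neg (by omega : ¬ i = j+1),
            if_neg (by omega : ¬ i = j+2)]
          exact h1 (i-2) (by omega)
  · rcases Nat.lt_or_ge i (j+1) with h | h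
    · simp only [if_pos (by omega : i ≤ j)]
      exact h2 i (by omega)
    · rcases Nat.eq_or_lt_of_le h with h' | h'
      · simp only [if_neg (by omega : ¬ i ≤ j), if_pos h'.symm]
        intro h0; rw [h0] at hs2; simp at hs2
      · rcases Nat.eq_or_lt_of_le h' with h'' | h''
        · simp only [if_neg (by omega : ¬ i ≤ j), if_neg (by omega : ¬ i = j+1),
            if_pos (by omega : i = j+2)]
          intro h0; rw [h0] at hs3; simp at hs3
        · simp only [if_neg (by omega : ¬ i ≤ j), if_neg (by omega : ¬ i = j+1),
            if_neg (by omega : ¬ i = j+2)]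
          exact h2 (i-2) (by omega)
  · rcases Nat.lt_or_ge i j with h | h
    · simp only [if_pos (by omega : i ≤ j), if_pos (by omega : i + 1 ≤ j)]
      exact h3 i (by omega)
    · rcases Nat.eq_or_lt_of_le h with h' | h'
      · simp only []
        rw [if_pos (by omega : i ≤ j), if_neg (by omega : ¬ i + 1 ≤ j),
          if_pos (by omega : i + 1 = j + 1), ← h']
        exact ho1
      · rcases (by omega : i = j + 1 ∨ i = j + 2 ∨ j + 3 ≤ i) with h'' | h'' | h''
        · simp only [if_neg (by omega : ¬ i ≤ j), if_pos h'',
            if_neg (by omega : ¬ i + 1 ≤ j), if_neg (by omega : ¬ i + 1 = j + 1),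
            if_pos (by omega : i + 1 = j + 2)]
          exact ho2
        · simp only [if_neg (by omega : ¬ i ≤ j), if_neg (by omega : ¬ i = j + 1),
            if_pos h'', if_neg (by omega : ¬ i + 1 ≤ j),
            if_neg (by omega : ¬ i + 1 = j + 1), if_neg (by omega : ¬ i + 1 = j + 2),
            (by omega : i + 1 - 2 = j + 1)]
          exact ho3
        · simp only [if_neg (by omega : ¬ i ≤ j), if_neg (by omega : ¬ i = j + 1),
            if_neg (by omega : ¬ i = j + 2), if_neg (by omega : ¬ i + 1 ≤ j),
            if_neg (by omega : ¬ i + 1 = j + 1), if_neg (by omega : ¬ i + 1 = j + 2),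
            (by omega : i + 1 - 2 = (i - 2) + 1)]
          exact h3 (i-2) (by omega)
  · rcases Nat.lt_or_ge i j with h | h
    · simp only [if_pos (by omega : i ≤ j), if_pos (by omega : i + 1 ≤ j)]
      exact h4 i (by omega)
    · rcases Nat.eq_or_lt_of_le h with h' | h'
      · simp only []
        rw [if_pos (by omega : i ≤ j), if_neg (by omega : ¬ i + 1 ≤ j),
          if_pos (by omega : i + 1 = j + 1), ← h']
        exact hs1
      · rcases (by omega : i = j + 1 ∨ i = j + 2 ∨ j + 3 ≤ i) with h'' | h'' | h''
        · simp only [if_neg (by omega : ¬ i ≤ j), if_pos h'',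
            if_neg (by omega : ¬ i + 1 ≤ j), if_neg (by omega : ¬ i + 1 = j + 1),
            if_pos (by omega : i + 1 = j + 2)]
          exact hs2
        · simp only [if_neg (by omega : ¬ i ≤ j), if_neg (by omega : ¬ i = j + 1),
            if_pos h'', if_neg (by omega : ¬ i + 1 ≤ j),
            if_neg (by omega : ¬ i + 1 = j + 1), if_neg (by omega : ¬ i + 1 = j + 2),
            (by omega : i + 1 - 2 = j + 1)]
          exact hs3
        · simp only [if_neg (by omega : ¬ i ≤ j), if_neg (by omega : ¬ i = j + 1),
            if_neg (by omega : ¬ i = j + 2), if_neg (by omega : ¬ i + 1 ≤ j),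
            if_neg (by omega : ¬ i + 1 = j + 1), if_neg (by omega : ¬ i + 1 = j + 2),
            (by omega : i + 1 - 2 = (i - 2) + 1)]
          exact h4 (i-2) (by omega)

open MeasureTheory Real Set in
lemma no_long_chain_zero (r : ℝ → ℝ) (hr : ContinuousOn r (Set.Icc (-1:ℝ) 1)) (n : ℕ)
    (horth : ∀ m : ℕ, m ≤ n → ∀ t : ℕ → ℝ,
      ∫ θ in Set.Ioo 0 Real.pi,
        r (Real.cos θ) * ∏ i ∈ Finset.range m, (Real.cos θ - t i) = 0)
    (hno : ¬ AltChain r (n+1)) : ∀ x ∈ Set.Icc (-1:ℝ) 1, r x = 0 := by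
  intro x₀ hx₀
  by_contra hrx₀
  classical
  have C0 : AltChain r 0 := ⟨fun _ => x₀, fun i _ => hx₀, fun i _ => hrx₀,
    fun i hi => absurd hi (by omega), fun i hi => absurd hi (by omega)⟩
  set m := Nat.findGreatest (AltChain r) n with hm_def
  have hm : AltChain r m := Nat.findGreatest_spec (Nat.zero_le n) C0
  have hmn : m ≤ n := Nat.findGreatest_le n
  have hnot : ¬ AltChain r (m+1) := by
    intro hC
    rcases Nat.lt_or_ge m n with hlt | hge
    · have := Nat.le_findGreatest (by omega : m + 1 ≤ n) hC
      omega
    · have hmn' : m = n := le_antisymm hmn hge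
      exact hno (hmn' ▸ hC)
  obtain ⟨z, hzI, hzne, hzlt, hzalt⟩ := hm
  have zmono : ∀ i j, i < j → j ≤ m → z i < z j := altChain_chain_mono hzlt
  set A : ℕ → Set ℝ :=
    fun j => {y | y ∈ Set.Icc (z j) (z (j+1)) ∧ 0 < r (z j) * r y} with hA
  set t : ℕ → ℝ := fun j => sSup (A j) with ht_def
  have hsubI : ∀ j, j < m → ∀ y, y ∈ Set.Icc (z j) (z (j+1)) → y ∈ Set.Icc (-1:ℝ) 1 :=
    fun j hj y hy => ⟨le_trans (hzI j (by omega)).1 hy.1,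
      le_trans hy.2 (hzI (j+1) (by omega)).2⟩
  have hAmem : ∀ j, j < m → z j ∈ A j := fun j hj =>
    ⟨⟨le_refl _, (zmono j (j+1) (by omega) (by omega)).le⟩,
      mul_self_pos.2 (hzne j (by omega))⟩
  have hAbdd : ∀ j, BddAbove (A j) := fun j => ⟨z (j+1), fun y hy => hy.1.2⟩
  have hAne : ∀ j, j < m → (A j).Nonempty := fun j hj => ⟨z j, hAmem j hj⟩
  have ht_lb : ∀ j, j < m → z j ≤ t j := fun j hj => le_csSup (hAbdd j) (hAmem j hj)
  have ht_ub : ∀ j, j < m → t j ≤ z (j+1) := fun j hj =>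
    csSup_le (hAne j hj) (fun y hy => hy.1.2)
  have G2 : ∀ j, j < m → ∀ y, t j < y → y ≤ z (j+1) → r (z j) * r y ≤ 0 := by
    intro j hj y hty hyz
    by_contra hcon
    push_neg at hcon
    have hyA : y ∈ A j := ⟨⟨le_trans (ht_lb j hj) hty.le, hyz⟩, hcon⟩
    exact absurd (le_csSup (hAbdd j) hyA) (not_le.2 hty)
  have G1 : ∀ j, j < m → ∀ y, z j ≤ y → y < t j → 0 ≤ r (z j) * r y := by
    intro j hj y hzy hyt
    by_contra hcon
    push_neg at hcon
    obtain ⟨y', hy'A, hyy'⟩ := exists_lt_of_lt_csSup (hAne j hj) hyt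
    have hy'lt : y' < z (j+1) := by
      rcases lt_or_eq_of_le hy'A.1.2 with h' | h'
      · exact h'
      · exfalso
        have h2 := hy'A.2
        rw [h'] at h2
        linarith [hzalt j hj]
    have hyzj : z j < y := by
      rcases lt_or_eq_of_le hzy with h' | h'
      · exact h'
      · exfalso; rw [← h'] at hcon; exact absurd hcon (not_lt.2 (mul_self_nonneg _))
    have hsy' : r y * r y' < 0 := by
      have h1 : 0 < r y' * r (z j) := by
        have := hy'A.2; linarith [mul_comm (r (z j)) (r y') ▸ this]
      have h2 : r (z j) * r y < 0 := hcon
      have := sign_neg_of_pos_neg h1 h2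
      linarith [mul_comm (r y') (r y) ▸ this]
    have hyI : y ∈ Set.Icc (-1:ℝ) 1 :=
      hsubI j hj y ⟨hzy, le_trans hyt.le (ht_ub j hj)⟩
    have hy'I : y' ∈ Set.Icc (-1:ℝ) 1 := hsubI j hj y' hy'A.1
    have hC := altChain_ext_mid hzI hzne hzlt hzalt hj hyI hy'I hyzj hyy' hy'lt hcon hsy'
    exact hnot (altChain_of_succ hC)
  have G3 : ∀ y, y ∈ Set.Icc (-1:ℝ) 1 → y < z 0 → 0 ≤ r (z 0) * r y := by
    intro y hy hylt
    by_contra hcon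
    push_neg at hcon
    have hys : r y * r (z 0) < 0 := by
      have := mul_comm (r (z 0)) (r y) ▸ hcon; linarith [this]
    exact hnot (altChain_ext_low hzI hzne hzlt hzalt hy hylt hys)
  have G4 : ∀ y, y ∈ Set.Icc (-1:ℝ) 1 → z m < y → 0 ≤ r (z m) * r y := by
    intro y hy hylt
    by_contra hcon
    push_neg at hcon
    exact hnot (altChain_ext_high hzI hzne hzlt hzalt hy hylt hcon)
  have F4 : ∀ j, j < m → t j < z (j+1) := by
    intro j hj
    have hcont : ContinuousWithinAt (fun y => r (z j) * r y) (Set.Icc (-1:ℝ) 1)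
        (z (j+1)) := continuousWithinAt_const.mul (hr _ (hzI (j+1) (by omega)))
    have hneg : r (z j) * r (z (j+1)) < 0 := hzalt j hj
    have hev : {y | r (z j) * r y < 0} ∈ nhdsWithin (z (j+1)) (Set.Icc (-1:ℝ) 1) :=
      hcont (Iio_mem_nhds hneg)
    rw [Metric.mem_nhdsWithin_iff] at hev
    obtain ⟨ε, hε, hball⟩ := hev
    have hub : ∀ y ∈ A j, y ≤ z (j+1) - ε/2 := by
      intro y hy
      by_contra hcy
      push_neg at hcy
      have h1 : y ≤ z (j+1) := hy.1.2
      have hdist : y ∈ Metric.ball (z (j+1)) ε := by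
        rw [Metric.mem_ball, Real.dist_eq, abs_of_nonpos (by linarith)]
        linarith
      have := hball ⟨hdist, hsubI j hj y hy.1⟩
      have h2 := hy.2
      simp only [Set.mem_setOf_eq] at this
      linarith
    have := csSup_le (hAne j hj) hub
    have h3 : t j ≤ z (j+1) - ε/2 := this
    linarith
  have tmono : ∀ i j, i < j → j < m → t i < t j := by
    intro i j hij hj
    have h1 : t i < z (i+1) := F4 i (by omega)
    have h2 : z (i+1) ≤ z j := by
      rcases Nat.eq_or_lt_of_le (by omega : i + 1 ≤ j) with h' | h'
      · rw [h']
      · exact (zmono (i+1) j h' (by omega)).le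
    linarith [ht_lb j hj]
  have alt_sign : ∀ d j, j + d ≤ m → 0 < (-1:ℝ)^d * (r (z j) * r (z (j+d))) := by
    intro d
    induction d with
    | zero =>
      intro j hj
      simpa using mul_self_pos.2 (hzne j (by omega))
    | succ d ih =>
      intro j hj
      have h1 : r (z j) * r (z (j+1)) < 0 := hzalt j (by omega)
      have h2 := ih (j+1) (by omega)
      have e : j + 1 + d = j + (d+1) := by omega
      rw [e] at h2
      have hb : 0 < r (z (j+1)) * r (z (j+1)) := mul_self_pos.2 (hzne (j+1) (by omega))
      have key : ((-1:ℝ))^(d+1) * (r (z j) * r (z (j+(d+1)))) * (r (z (j+1)) * r (z (j+1)))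
          = (- (r (z j) * r (z (j+1)))) * ((-1:ℝ)^d * (r (z (j+1)) * r (z (j+(d+1))))) := by
        ring
      have hpos : 0 < (- (r (z j) * r (z (j+1)))) *
          ((-1:ℝ)^d * (r (z (j+1)) * r (z (j+(d+1))))) := mul_pos (by linarith) h2
      rw [← key] at hpos
      by_contra hX
      push_neg at hX
      nlinarith [hpos, hb, hX]
  have hregion : ∀ y, y ∈ Set.Icc (-1:ℝ) 1 → ∀ j, j ≤ m → (∀ i, i < j → t i < y) →
      (∀ i, j ≤ i → i < m → y < t i) → 0 ≤ r (z j) * r y := by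
    intro y hy j hjm hlow hhigh
    rcases lt_or_ge y (z j) with hylt | hyge
    · rcases Nat.eq_zero_or_pos j with rfl | hj0
      · exact G3 y hy hylt
      · obtain ⟨j', rfl⟩ : ∃ j', j = j' + 1 := ⟨j - 1, by omega⟩
        have h1 : t j' < y := hlow j' (by omega)
        have h2 : r (z j') * r y ≤ 0 := G2 j' (by omega) y h1 hylt.le
        exact sign_nonneg_of_neg_nonpos (hzalt j' (by omega)) h2
    · rcases Nat.lt_or_ge j m with hjm' | hjm'
      · exact G1 j hjm' y hyge (hhigh j (le_refl j) hjm')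
      · have hjm'' : j = m := by omega
        subst hjm''
        rcases lt_or_eq_of_le hyge with h' | h'
        · exact G4 y hy h'
        · rw [← h']; exact mul_self_nonneg _
  have hss : ∀ k : ℕ, ((-1:ℝ))^k * ((-1:ℝ))^k = 1 := by
    intro k
    rw [← pow_add]
    exact Even.neg_one_pow ⟨k, rfl⟩
  have Qsign : ∀ y j, j ≤ m → (∀ i, i < j → t i < y) → (∀ i, j ≤ i → i < m → y < t i) →
      0 < (-1:ℝ)^(m-j) * ∏ i ∈ Finset.range m, (y - t i) := by
    intro y j hjm hlow hhigh
    have hsplit : ∏ i ∈ Finset.range m, (y - t i) =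
        (∏ i ∈ Finset.Ico 0 j, (y - t i)) * (∏ i ∈ Finset.Ico j m, (y - t i)) := by
      rw [Finset.prod_Ico_consecutive _ (Nat.zero_le j) hjm, Finset.range_eq_Ico]
    have h1 : 0 < ∏ i ∈ Finset.Ico 0 j, (y - t i) :=
      Finset.prod_pos (fun i hi => by
        have := hlow i (Finset.mem_Ico.1 hi).2; linarith)
    have h3 : 0 < ∏ i ∈ Finset.Ico j m, (t i - y) :=
      Finset.prod_pos (fun i hi => by
        have := hhigh i (Finset.mem_Ico.1 hi).1 (Finset.mem_Ico.1 hi).2; linarith)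
    have h2 : ∏ i ∈ Finset.Ico j m, (y - t i) =
        (-1:ℝ)^(m-j) * ∏ i ∈ Finset.Ico j m, (t i - y) := by
      rw [Finset.prod_congr rfl
        (fun i _ => show y - t i = (-1) * (t i - y) by ring),
        Finset.prod_mul_distrib, Finset.prod_const, Nat.card_Ico]
    rw [hsplit, h2]
    have e2 : (-1:ℝ)^(m-j) * ((∏ i ∈ Finset.Ico 0 j, (y - t i)) *
        ((-1:ℝ)^(m-j) * ∏ i ∈ Finset.Ico j m, (t i - y))) =
        ((-1:ℝ)^(m-j) * (-1:ℝ)^(m-j)) * ((∏ i ∈ Finset.Ico 0 j, (y - t i)) *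
          (∏ i ∈ Finset.Ico j m, (t i - y))) := by ring
    rw [e2, hss, one_mul]
    exact mul_pos h1 h3
  have hglobal : ∀ y, y ∈ Set.Icc (-1:ℝ) 1 →
      0 ≤ r (z m) * (r y * ∏ i ∈ Finset.range m, (y - t i)) := by
    intro y hy
    by_cases hyt : ∃ i, i < m ∧ y = t i
    · obtain ⟨i, him, rfl⟩ := hyt
      have : ∏ i' ∈ Finset.range m, (t i - t i') = 0 :=
        Finset.prod_eq_zero (Finset.mem_range.2 him) (by ring)
      rw [this, mul_zero, mul_zero]
    · push_neg at hyt
      obtain ⟨j, hjm, hlow, hhigh⟩ : ∃ j, j ≤ m ∧ (∀ i, i < j → t i < y) ∧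
          (∀ i, j ≤ i → i < m → y < t i) := by
        by_cases hex : ∃ i, i < m ∧ y < t i
        · refine ⟨Nat.find hex, ?_, ?_, ?_⟩
          · obtain ⟨i, him, hyi⟩ := id hex
            exact le_trans (Nat.find_min' hex ⟨him, hyi⟩) (by omega)
          · intro i hij
            have him : i < m := by
              obtain ⟨i0, hi0m, hy0⟩ := id hex
              have h2 := Nat.find_min' hex ⟨hi0m, hy0⟩
              omega
            have hmin := Nat.find_min hex hij
            push_neg at hmin
            exact lt_of_le_of_ne (hmin him) (Ne.symm (hyt i him))
          · intro i hji him
            have hspec := Nat.find_spec hex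
            rcases Nat.eq_or_lt_of_le hji with h' | h'
            · rw [← h']; exact hspec.2
            · exact lt_trans hspec.2 (tmono _ i h' him)
        · refine ⟨m, le_refl m, ?_, ?_⟩
          · intro i him
            have hni : ¬ (i < m ∧ y < t i) := fun hc => hex ⟨i, hc⟩
            push_neg at hni
            exact lt_of_le_of_ne (hni him) (Ne.symm (hyt i him))
          · intro i hji him; omega
      have hsign := hregion y hy j hjm hlow hhigh
      have hq := Qsign y j hjm hlow hhigh
      have hc := alt_sign (m - j) j (by omega)
      have e : j + (m - j) = m := by omega
      rw [e] at hc
      have h1 : 0 ≤ ((-1:ℝ)^(m-j) * (r (z j) * r (z m))) * ((r (z j) * r y) *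
          ((-1:ℝ)^(m-j) * ∏ i ∈ Finset.range m, (y - t i))) :=
        mul_nonneg hc.le (mul_nonneg hsign hq.le)
      have e2 : ((-1:ℝ)^(m-j) * (r (z j) * r (z m))) * ((r (z j) * r y) *
          ((-1:ℝ)^(m-j) * ∏ i ∈ Finset.range m, (y - t i))) =
          ((-1:ℝ)^(m-j) * (-1:ℝ)^(m-j)) * ((r (z j) * r (z j)) *
            (r (z m) * (r y * ∏ i ∈ Finset.range m, (y - t i)))) := by ring
      rw [e2, hss, one_mul] at h1
      have hz2 : 0 < r (z j) * r (z j) := mul_self_pos.2 (hzne j hjm)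
      by_contra hX
      push_neg at hX
      have := mul_neg_of_pos_of_neg hz2 hX
      linarith
  -- now the integral contradiction
  set Q : ℝ → ℝ := fun y => ∏ i ∈ Finset.range m, (y - t i) with hQ_def
  have hQcont : Continuous Q := by
    apply continuous_finset_prod
    intro i _
    exact continuous_id.sub continuous_const
  have hmapsto : Set.MapsTo Real.cos (Set.Icc 0 Real.pi) (Set.Icc (-1:ℝ) 1) :=
    fun θ _ => ⟨Real.neg_one_le_cos θ, Real.cos_le_one θ⟩
  have hrc : ContinuousOn (fun θ => r (Real.cos θ)) (Set.Icc 0 Real.pi) :=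
    hr.comp Real.continuous_cos.continuousOn hmapsto
  have hgcont : ContinuousOn (fun θ => r (Real.cos θ) * Q (Real.cos θ))
      (Set.Icc 0 Real.pi) := hrc.mul (hQcont.comp Real.continuous_cos).continuousOn
  have hgint : IntegrableOn (fun θ => r (Real.cos θ) * Q (Real.cos θ))
      (Set.Ioo 0 Real.pi) := hgcont.integrableOn_Icc.mono_set Set.Ioo_subset_Icc_self
  have hint0 : ∫ θ in Set.Ioo 0 Real.pi, r (Real.cos θ) * Q (Real.cos θ) = 0 :=
    horth m hmn t
  set F : ℝ → ℝ := fun θ => r (z m) * (r (Real.cos θ) * Q (Real.cos θ)) with hF_def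
  have hFint : IntegrableOn F (Set.Ioo 0 Real.pi) := hgint.const_mul _
  have hF0 : ∫ θ in Set.Ioo 0 Real.pi, F θ = 0 := by
    rw [hF_def]
    rw [MeasureTheory.integral_const_mul, hint0, mul_zero]
  have hFnn : ∀ θ, θ ∈ Set.Ioo (0:ℝ) Real.pi → 0 ≤ F θ := fun θ _ =>
    hglobal (Real.cos θ) ⟨Real.neg_one_le_cos θ, Real.cos_le_one θ⟩
  -- find a point with positive value
  have hev : {y | r y ≠ 0} ∈ nhdsWithin x₀ (Set.Icc (-1:ℝ) 1) :=
    (hr x₀ hx₀) (isOpen_ne.mem_nhds hrx₀)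
  rw [Metric.mem_nhdsWithin_iff] at hev
  obtain ⟨ε, hε, hball⟩ := hev
  have hx₀1 : (-1:ℝ) ≤ x₀ := hx₀.1
  have hx₀2 : x₀ ≤ 1 := hx₀.2
  set lo := max (x₀ - ε/2) (-1) with hlo_def
  set hi := min (x₀ + ε/2) 1 with hhi_def
  have hlohi : lo < hi := by
    rw [hlo_def, hhi_def]
    apply max_lt <;> apply lt_min <;> linarith
  have hIoosub : Set.Ioo lo hi ⊆ Set.Ioo (-1:ℝ) 1 := fun y hy =>
    ⟨lt_of_le_of_lt (le_max_right _ _) hy.1, lt_of_lt_of_le hy.2 (min_le_right _ _)⟩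
  have hIooball : Set.Ioo lo hi ⊆ Metric.ball x₀ ε := by
    intro y hy
    have h1 : x₀ - ε/2 ≤ lo := le_max_left _ _
    have h2 : hi ≤ x₀ + ε/2 := min_le_left _ _
    rw [Metric.mem_ball, Real.dist_eq, abs_lt]
    constructor <;> [linarith [hy.1]; linarith [hy.2]]
  have hTfin : ({y : ℝ | ∃ i, i < m ∧ y = t i}).Finite := by
    apply Set.Finite.subset ((Set.finite_lt_nat m).image t)
    rintro y ⟨i, him, rfl⟩
    exact ⟨i, him, rfl⟩
  obtain ⟨y₁, hy₁⟩ := ((Set.Ioo_infinite hlohi).diff hTfin).nonempty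
  have hy₁Ioo : y₁ ∈ Set.Ioo lo hi := hy₁.1
  have hy₁T : ∀ i, i < m → y₁ ≠ t i := by
    intro i him he
    exact hy₁.2 ⟨i, him, he⟩
  have hy₁mem : y₁ ∈ Set.Ioo (-1:ℝ) 1 := hIoosub hy₁Ioo
  have hy₁Icc : y₁ ∈ Set.Icc (-1:ℝ) 1 := ⟨hy₁mem.1.le, hy₁mem.2.le⟩
  have hy₁ne : r y₁ ≠ 0 := hball ⟨hIooball hy₁Ioo, hy₁Icc⟩
  have hQy₁ : Q y₁ ≠ 0 := by
    rw [hQ_def]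
    apply Finset.prod_ne_zero_iff.2
    intro i hi
    exact sub_ne_zero.2 (hy₁T i (Finset.mem_range.1 hi))
  have hpos : 0 < r (z m) * (r y₁ * Q y₁) := by
    refine lt_of_le_of_ne (hglobal y₁ hy₁Icc) (Ne.symm ?_)
    exact mul_ne_zero (hzne m (le_refl m)) (mul_ne_zero hy₁ne hQy₁)
  set θ₁ := Real.arccos y₁ with hθ₁_def
  have hθ₁mem : θ₁ ∈ Set.Ioo (0:ℝ) Real.pi := by
    constructor
    · exact Real.arccos_pos.2 hy₁mem.2
    · rcases (Real.arccos_le_pi y₁).lt_or_eq with h' | h'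
      · exact h'
      · exact absurd (Real.arccos_eq_pi.1 h') (by linarith [hy₁mem.1])
  have hcosθ₁ : Real.cos θ₁ = y₁ := Real.cos_arccos hy₁mem.1.le hy₁mem.2.le
  have hFθ₁ : 0 < F θ₁ := by
    rw [hF_def]
    simp only [hcosθ₁]
    exact hpos
  have hFcont : ContinuousOn F (Set.Icc 0 Real.pi) := continuousOn_const.mul hgcont
  have hev2 : {θ | F θ₁ / 2 < F θ} ∈ nhdsWithin θ₁ (Set.Icc 0 Real.pi) :=
    (hFcont θ₁ (Set.Ioo_subset_Icc_self hθ₁mem)) (Ioi_mem_nhds (by linarith))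
  rw [Metric.mem_nhdsWithin_iff] at hev2
  obtain ⟨δ, hδ, hball2⟩ := hev2
  set lo2 := max (θ₁ - δ/2) 0 with hlo2_def
  set hi2 := min (θ₁ + δ/2) Real.pi with hhi2_def
  have hθ₁0 : 0 < θ₁ := hθ₁mem.1
  have hθ₁π : θ₁ < Real.pi := hθ₁mem.2
  have hlohi2 : lo2 < hi2 := by
    rw [hlo2_def, hhi2_def]
    apply max_lt <;> apply lt_min <;> linarith
  have hsub2 : Set.Ioo lo2 hi2 ⊆ Set.Ioo (0:ℝ) Real.pi := fun θ hθ =>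
    ⟨lt_of_le_of_lt (le_max_right _ _) hθ.1, lt_of_lt_of_le hθ.2 (min_le_right _ _)⟩
  have hball2' : Set.Ioo lo2 hi2 ⊆ Metric.ball θ₁ δ := by
    intro θ hθ
    have h1 : θ₁ - δ/2 ≤ lo2 := le_max_left _ _
    have h2 : hi2 ≤ θ₁ + δ/2 := min_le_left _ _
    rw [Metric.mem_ball, Real.dist_eq, abs_lt]
    constructor <;> [linarith [hθ.1]; linarith [hθ.2]]
  have hlower : ∀ θ ∈ Set.Ioo lo2 hi2, F θ₁ / 2 ≤ F θ := by
    intro θ hθ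
    have := hball2 ⟨hball2' hθ, Set.Ioo_subset_Icc_self (hsub2 hθ)⟩
    exact this.le
  have hmono2 : ∫ θ in Set.Ioo lo2 hi2, F θ ≤ ∫ θ in Set.Ioo 0 Real.pi, F θ := by
    apply setIntegral_mono_set hFint
    · exact (ae_restrict_iff' measurableSet_Ioo).2 (Filter.Eventually.of_forall hFnn)
    · exact HasSubset.Subset.eventuallyLE hsub2
  have hlow2 : (F θ₁ / 2) * (volume (Set.Ioo lo2 hi2)).toReal ≤
      ∫ θ in Set.Ioo lo2 hi2, F θ :=
    by have h := setIntegral_ge_of_const_le measurableSet_Ioo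
         (ne_of_lt measure_Ioo_lt_top) hlower (hFint.mono_set hsub2)
       rw [smul_eq_mul, mul_comm] at h; exact h
  have hvol : (volume (Set.Ioo lo2 hi2)).toReal = hi2 - lo2 := by
    rw [Real.volume_Ioo, ENNReal.toReal_ofReal (by linarith)]
  rw [hvol] at hlow2
  nlinarith [hlow2, hmono2, hF0, hFθ₁, hlohi2]


/-- Sign changes of the remainder of the Fourier–Chebyshev partial sum:
either f coincides with its partial sum P_n on [-1,1], or f − P_n changes sign
at least n + 1 times on [-1,1]. -/
theorem fourier_chebyshev_remainder_sign_changes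
    (f : ℝ → ℝ) (hf : ContinuousOn f (Set.Icc (-1 : ℝ) 1)) (n : ℕ)
    (c : ℕ → ℝ)
    (hc0 : c 0 = (1 / Real.pi) *
      ∫ x in Set.Icc (-1 : ℝ) 1, f x * (1 / Real.sqrt (1 - x ^ 2)))
    (hci : ∀ i : ℕ, 1 ≤ i → i ≤ n → c i = (2 / Real.pi) *
      ∫ x in Set.Icc (-1 : ℝ) 1, f x * (T ℝ i).eval x * (1 / Real.sqrt (1 - x ^ 2)))
    (P : ℝ → ℝ)
    (hP : ∀ x, P x = ∑ i ∈ Finset.range (n + 1), c i * (T ℝ i).eval x) :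
    (∀ x ∈ Set.Icc (-1 : ℝ) 1, f x = P x) ∨
      ∃ x : Fin (n + 2) → ℝ, StrictMono x ∧ (∀ j, x j ∈ Set.Icc (-1 : ℝ) 1) ∧
        ∀ j : Fin (n + 1),
          (f (x j.castSucc) - P (x j.castSucc)) * (f (x j.succ) - P (x j.succ)) < 0 := by
  by_cases hch : ∃ x : Fin (n + 2) → ℝ, StrictMono x ∧
      (∀ j, x j ∈ Set.Icc (-1 : ℝ) 1) ∧ ∀ j : Fin (n + 1),
        (f (x j.castSucc) - P (x j.castSucc)) * (f (x j.succ) - P (x j.succ)) < 0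
  · exact Or.inr hch
  left
  set r : ℝ → ℝ := fun x => f x - P x with hr_def
  have hπ : Real.pi ≠ 0 := Real.pi_ne_zero
  have hPcont : Continuous P := by
    have hPe : P = fun x => ∑ i ∈ Finset.range (n + 1), c i * (T ℝ i).eval x :=
      funext hP
    rw [hPe]
    exact continuous_finset_sum _ (fun i _ => continuous_const.mul (T ℝ i).continuous)
  have hrcont : ContinuousOn r (Set.Icc (-1:ℝ) 1) := hf.sub hPcont.continuousOn
  have hmapsto : Set.MapsTo Real.cos (Set.Icc 0 Real.pi) (Set.Icc (-1:ℝ) 1) :=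
    fun θ _ => ⟨Real.neg_one_le_cos θ, Real.cos_le_one θ⟩
  have hIcc : ∀ G : ℝ → ℝ, ContinuousOn G (Set.Icc (0:ℝ) Real.pi) →
      IntegrableOn G (Set.Ioo 0 Real.pi) := fun G hG =>
    hG.integrableOn_Icc.mono_set Set.Ioo_subset_Icc_self
  have hTcos : ∀ (i : ℕ) (θ : ℝ),
      (T ℝ (i : ℤ)).eval (Real.cos θ) = Real.cos ((i:ℝ) * θ) := by
    intro i θ
    have h := Polynomial.Chebyshev.T_real_cos θ (i : ℤ)
    rw [h]
    norm_num
  have horthT : ∀ i : ℕ, i ≤ n →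
      ∫ θ in Set.Ioo 0 Real.pi, r (Real.cos θ) * (T ℝ i).eval (Real.cos θ) = 0 := by
    intro i hin
    have hfTcont : ContinuousOn
        (fun θ => f (Real.cos θ) * (T ℝ i).eval (Real.cos θ)) (Set.Icc 0 Real.pi) :=
      (hf.comp Real.continuous_cos.continuousOn hmapsto).mul
        (((T ℝ i).continuous).comp Real.continuous_cos).continuousOn
    have hPTcont : ContinuousOn
        (fun θ => P (Real.cos θ) * (T ℝ i).eval (Real.cos θ)) (Set.Icc 0 Real.pi) :=
      ((hPcont.comp Real.continuous_cos).mul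
        (((T ℝ i).continuous).comp Real.continuous_cos)).continuousOn
    have hsplit : ∫ θ in Set.Ioo 0 Real.pi, r (Real.cos θ) * (T ℝ i).eval (Real.cos θ)
        = (∫ θ in Set.Ioo 0 Real.pi, f (Real.cos θ) * (T ℝ i).eval (Real.cos θ))
          - ∫ θ in Set.Ioo 0 Real.pi, P (Real.cos θ) * (T ℝ i).eval (Real.cos θ) := by
      rw [← integral_sub (hIcc _ hfTcont) (hIcc _ hPTcont)]
      refine setIntegral_congr_fun measurableSet_Ioo (fun θ _ => ?_)
      simp only [hr_def]
      ring
    have hppt : ∀ θ : ℝ, P (Real.cos θ) * (T ℝ i).eval (Real.cos θ) =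
        ∑ j ∈ Finset.range (n+1),
          c j * (Real.cos ((j:ℝ) * θ) * Real.cos ((i:ℝ) * θ)) := by
      intro θ
      rw [hP, Finset.sum_mul]
      exact Finset.sum_congr rfl (fun j _ => by rw [hTcos j θ, hTcos i θ]; ring)
    have hPpart : ∫ θ in Set.Ioo 0 Real.pi, P (Real.cos θ) * (T ℝ i).eval (Real.cos θ)
        = c i * (if i = 0 then Real.pi else Real.pi / 2) := by
      rw [setIntegral_congr_fun measurableSet_Ioo (fun θ _ => hppt θ)]
      rw [MeasureTheory.integral_finset_sum _ (fun j _ => by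
        exact ((continuous_const.mul
          ((Real.continuous_cos.comp (continuous_const.mul continuous_id)).mul
           (Real.continuous_cos.comp (continuous_const.mul continuous_id)))).integrableOn_Icc
            (a := (0:ℝ)) (b := Real.pi)).mono_set Set.Ioo_subset_Icc_self)]
      have hterm : ∀ j ∈ Finset.range (n+1),
          (∫ θ in Set.Ioo 0 Real.pi,
            c j * (Real.cos ((j:ℝ) * θ) * Real.cos ((i:ℝ) * θ))) =
          c j * (if j = i then (if j = 0 then Real.pi else Real.pi / 2) else 0) := by
        intro j _
        rw [MeasureTheory.integral_const_mul, cos_mul_cos_integral]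
      rw [Finset.sum_congr rfl hterm]
      rw [Finset.sum_eq_single i]
      · simp
      · intro j _ hji
        simp [hji]
      · intro hni
        exact absurd (Finset.mem_range.2 (by omega)) hni
    rcases Nat.eq_zero_or_pos i with rfl | hi
    · have hfpart : ∫ θ in Set.Ioo 0 Real.pi,
          f (Real.cos θ) * (T ℝ (0:ℕ)).eval (Real.cos θ)
          = ∫ x in Set.Icc (-1:ℝ) 1, f x * (1 / Real.sqrt (1 - x ^ 2)) := by
        rw [cheb_subst f]
        refine setIntegral_congr_fun measurableSet_Ioo (fun θ _ => ?_)
        norm_num [T_zero]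
      have hval : ∫ x in Set.Icc (-1:ℝ) 1, f x * (1 / Real.sqrt (1 - x ^ 2))
          = Real.pi * c 0 := by
        rw [hc0]; field_simp
      rw [hsplit, hfpart, hval, hPpart]
      simp
      ring
    · have hfpart : ∫ θ in Set.Ioo 0 Real.pi,
          f (Real.cos θ) * (T ℝ i).eval (Real.cos θ)
          = ∫ x in Set.Icc (-1:ℝ) 1,
              f x * (T ℝ i).eval x * (1 / Real.sqrt (1 - x ^ 2)) :=
        (cheb_subst (fun x => f x * (T ℝ i).eval x)).symm
      have hval : ∫ x in Set.Icc (-1:ℝ) 1,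
          f x * (T ℝ i).eval x * (1 / Real.sqrt (1 - x ^ 2))
          = (Real.pi / 2) * c i := by
        rw [hci i (by omega) hin]; field_simp
      rw [hsplit, hfpart, hval, hPpart, if_neg (by omega : ¬ i = 0)]
      ring
  have horthQ : ∀ m : ℕ, m ≤ n → ∀ t : ℕ → ℝ,
      ∫ θ in Set.Ioo 0 Real.pi,
        r (Real.cos θ) * ∏ i ∈ Finset.range m, (Real.cos θ - t i) = 0 := by
    intro m hmn t
    obtain ⟨a, ha⟩ := chebRep_mono hmn (chebRep_prod t m)
    have hpt : ∀ θ : ℝ, r (Real.cos θ) * ∏ i ∈ Finset.range m, (Real.cos θ - t i) =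
        ∑ i ∈ Finset.range (n+1),
          a i * (r (Real.cos θ) * (T ℝ i).eval (Real.cos θ)) := by
      intro θ
      have ha' := ha (Real.cos θ)
      simp only [] at ha'
      rw [ha', Finset.mul_sum]
      exact Finset.sum_congr rfl (fun i _ => by ring)
    rw [setIntegral_congr_fun measurableSet_Ioo (fun θ _ => hpt θ)]
    rw [MeasureTheory.integral_finset_sum _ (fun i _ => by
      exact hIcc _ (continuousOn_const.mul
        ((hrcont.comp Real.continuous_cos.continuousOn hmapsto).mul
          (((T ℝ i).continuous).comp Real.continuous_cos).continuousOn)))]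
    refine Finset.sum_eq_zero (fun i hi => ?_)
    rw [MeasureTheory.integral_const_mul, horthT i (by
      simp only [Finset.mem_range] at hi; omega), mul_zero]
  have hno : ¬ AltChain r (n+1) := by
    intro hA
    obtain ⟨x, h1, h2, h3⟩ := altChain_to_fin hA
    exact hch ⟨x, h1, h2, fun j => h3 j⟩
  intro x hx
  have hz := no_long_chain_zero r hrcont n horthQ hno x hx
  have : f x - P x = 0 := hz
  linarith
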